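/- For all x in (0, π/2), x² > sin(x) · sinh(x). -/
import Mathlib

open Real Set

private lemma pos_of_deriv_pos (g : ℝ → ℝ) (hg : Differentiable ℝ g) (h0 : g 0 = 0)
    (hd : ∀ y ∈ Set.Ioo 0 (Real.pi / 2), 0 < deriv g y) :
    ∀ y ∈ Set.Ioo 0 (Real.pi / 2), 0 < g y := by
  have hmono : StrictMonoOn g (Set.Icc 0 (Real.pi / 2)) := by
    apply strictMonoOn_of_deriv_pos (convex_Icc _ _) (hg.continuous.continuousOn)
    intro y hy
    rw [interior_Icc] at hy
    exact hd y hy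
  intro y hy
  have h1 : (0 : ℝ) ∈ Set.Icc 0 (Real.pi / 2) :=
    ⟨le_refl _, by positivity⟩
  have h2 : y ∈ Set.Icc 0 (Real.pi / 2) := ⟨hy.1.le, hy.2.le⟩
  have := hmono h1 h2 hy.1
  linarith [this, h0.symm ▸ this]

private lemma lem1 : ∀ y ∈ Set.Ioo 0 (Real.pi / 2),
    0 < Real.sin y * Real.cosh y - Real.cos y * Real.sinh y := by
  apply pos_of_deriv_pos
  · fun_prop
  · simp
  · intro y hy
    have hda : HasDerivAt (fun y => Real.sin y * Real.cosh y - Real.cos y * Real.sinh y)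
        ((Real.cos y * Real.cosh y + Real.sin y * Real.sinh y) -
          (-Real.sin y * Real.sinh y + Real.cos y * Real.cosh y)) y :=
      ((Real.hasDerivAt_sin y).mul (Real.hasDerivAt_cosh y)).sub
        ((Real.hasDerivAt_cos y).mul (Real.hasDerivAt_sinh y))
    rw [hda.deriv]
    have hy2 := hy.2
    have hs : 0 < Real.sin y := Real.sin_pos_of_pos_of_lt_pi hy.1 (by linarith [Real.pi_pos])
    have hsh : 0 < Real.sinh y := Real.sinh_pos_iff.mpr hy.1
    nlinarith

private lemma lem2 : ∀ y ∈ Set.Ioo 0 (Real.pi / 2),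
    0 < 1 - Real.cos y * Real.cosh y := by
  apply pos_of_deriv_pos
  · fun_prop
  · simp
  · intro y hy
    have hda : HasDerivAt (fun y => 1 - Real.cos y * Real.cosh y)
        (0 - (-Real.sin y * Real.cosh y + Real.cos y * Real.sinh y)) y :=
      (hasDerivAt_const y 1).sub ((Real.hasDerivAt_cos y).mul (Real.hasDerivAt_cosh y))
    rw [hda.deriv]
    have := lem1 y hy
    linarith

private lemma lem3 : ∀ y ∈ Set.Ioo 0 (Real.pi / 2),
    0 < 2 * y - (Real.cos y * Real.sinh y + Real.sin y * Real.cosh y) := by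
  apply pos_of_deriv_pos
  · fun_prop
  · simp
  · intro y hy
    have hda : HasDerivAt (fun y => 2 * y - (Real.cos y * Real.sinh y + Real.sin y * Real.cosh y))
        (2 * 1 - ((-Real.sin y * Real.sinh y + Real.cos y * Real.cosh y) +
          (Real.cos y * Real.cosh y + Real.sin y * Real.sinh y))) y :=
      ((hasDerivAt_id y).const_mul 2).sub
        (((Real.hasDerivAt_cos y).mul (Real.hasDerivAt_sinh y)).add
          ((Real.hasDerivAt_sin y).mul (Real.hasDerivAt_cosh y)))
    rw [hda.deriv]
    have := lem2 y hy
    nlinarith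

theorem stmt_1 (x : ℝ) (hx : x ∈ Set.Ioo 0 (Real.pi / 2)) :
    x ^ 2 > Real.sin x * Real.sinh x := by
  have key : ∀ y ∈ Set.Ioo 0 (Real.pi / 2), 0 < y ^ 2 - Real.sin y * Real.sinh y := by
    apply pos_of_deriv_pos
    · fun_prop
    · simp
    · intro y hy
      have hda : HasDerivAt (fun y => y ^ 2 - Real.sin y * Real.sinh y)
          (2 * y ^ 1 - (Real.cos y * Real.sinh y + Real.sin y * Real.cosh y)) y := by
        have h1 : HasDerivAt (fun y : ℝ => y ^ 2) (2 * y ^ 1) y := by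
          simpa using hasDerivAt_pow 2 y
        exact h1.sub
          ((Real.hasDerivAt_sin y).mul (Real.hasDerivAt_sinh y))
      rw [hda.deriv]
      have := lem3 y hy
      linarith [this]
  linarith [key x hx]
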